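/- Disjointness of bounding regions of non-consecutive 2-bubbles: Let Δ ≥ 5 be an integer, let u, v, w, x ∈ ℝ² be points with u_y = v_y = w_y = x_y, u_x ≤ v_x ≤ w_x ≤ x_x and v_x − u_x = x_x − w_x ≤ w_x − v_x, and let ℓ₀, r₀, ℓ, r be integers with 0 ≤ ℓ₀, r₀ ≤ Δ−1, 2 ≤ ℓ ≤ Δ−1 and 0 ≤ r ≤ Δ−3. Then BRU(uv, ℓ₀, r, ((Δ−3)/(Δ−4))·(v_x − u_x)) ∩ BRU(wx, ℓ, r₀, ((Δ−3)/(Δ−4))·(x_x − w_x)) = ∅. -/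
import Mathlib


open Set

/-- The vector `f i = (−1/2 + (i−1)/(Δ−3), 1)`. -/
noncomputable def f (Δ i : ℕ) : ℝ × ℝ :=
  (-(1 / 2) + ((i : ℝ) - 1) / ((Δ : ℝ) - 3), 1)

/-- The cross product `cross(d, w) = d_x·w_y − d_y·w_x`. -/
def cross (d w : ℝ × ℝ) : ℝ := d.1 * w.2 - d.2 * w.1

/-- The left bounding cone `LBR(v, ℓ)`. -/
def LBR (Δ : ℕ) (v : ℝ × ℝ) (ℓ : ℕ) : Set (ℝ × ℝ) :=
  insert v {p | v.2 ≤ p.2 ∧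
    (ℓ = 1 → cross (f Δ 1) (p - v) ≤ 0) ∧
    (Δ = 4 ∧ ℓ = 2 → v.1 < p.1) ∧
    (5 ≤ Δ ∧ 2 ≤ ℓ ∧ ℓ ≤ Δ - 2 →
      cross (f Δ ℓ + (1 / ((Δ : ℝ) - 4)) • f Δ 1) (p - v) < 0) ∧
    (ℓ = Δ - 1 → cross (f Δ (Δ - 2)) (p - v) < 0)}

/-- The right bounding cone `RBR(v, r)`. -/
def RBR (Δ : ℕ) (v : ℝ × ℝ) (r : ℕ) : Set (ℝ × ℝ) :=
  insert v {p | v.2 ≤ p.2 ∧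
    (r = 0 → 0 < cross (f Δ 1) (p - v)) ∧
    (Δ = 4 ∧ r = 1 → p.1 < v.1) ∧
    (5 ≤ Δ ∧ 1 ≤ r ∧ r ≤ Δ - 3 →
      0 < cross (f Δ r + (1 / ((Δ : ℝ) - 4)) • f Δ (Δ - 2)) (p - v)) ∧
    (r = Δ - 2 → 0 ≤ cross (f Δ (Δ - 2)) (p - v))}

/-- The bounding region `BR(uv, ℓ, r) = LBR(u, ℓ) ∩ RBR(v, r)`. -/
def BR (Δ : ℕ) (u v : ℝ × ℝ) (ℓ r : ℕ) : Set (ℝ × ℝ) :=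
  LBR Δ u ℓ ∩ RBR Δ v r

/-- The truncated bounding region `BRU(uv, ℓ, r, h)`. -/
def BRU (Δ : ℕ) (u v : ℝ × ℝ) (ℓ r : ℕ) (h : ℝ) : Set (ℝ × ℝ) :=
  BR Δ u v ℓ r ∩ {p | p.2 < u.2 + h}

set_option maxHeartbeats 2000000 in
/-- Disjointness of bounding regions of non-consecutive 2-bubbles. -/
theorem bounding_regions_nonconsecutive_disjoint (Δ : ℕ) (hΔ : 5 ≤ Δ) (u v w x : ℝ × ℝ)
    (hy1 : u.2 = v.2) (hy2 : v.2 = w.2) (hy3 : w.2 = x.2)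
    (hx1 : u.1 ≤ v.1) (hx2 : v.1 ≤ w.1) (hx3 : w.1 ≤ x.1)
    (heq : v.1 - u.1 = x.1 - w.1) (hle : x.1 - w.1 ≤ w.1 - v.1)
    (ℓ₀ r₀ ℓ r : ℕ) (hℓ₀ : ℓ₀ ≤ Δ - 1) (hr₀ : r₀ ≤ Δ - 1)
    (hℓ1 : 2 ≤ ℓ) (hℓ2 : ℓ ≤ Δ - 1) (hr : r ≤ Δ - 3) :
    BRU Δ u v ℓ₀ r (((Δ : ℝ) - 3) / ((Δ : ℝ) - 4) * (v.1 - u.1)) ∩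
      BRU Δ w x ℓ r₀ (((Δ : ℝ) - 3) / ((Δ : ℝ) - 4) * (x.1 - w.1)) = ∅ := by

  have hΔ' : (5:ℝ) ≤ (Δ:ℝ) := by exact_mod_cast hΔ
  have hc : (0:ℝ) < (Δ:ℝ) - 4 := by linarith
  have hs : (0:ℝ) < (Δ:ℝ) - 3 := by linarith
  have h2cast : ((Δ - 2 : ℕ):ℝ) = (Δ:ℝ) - 2 := by
    rw [Nat.cast_sub (by omega)]; norm_num
  -- cross identities
  have ER : ∀ (a : ℕ) (q : ℝ × ℝ),
      ((Δ:ℝ)-4)*((Δ:ℝ)-3) * cross (f Δ a + (1 / ((Δ : ℝ) - 4)) • f Δ (Δ - 2)) q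
      = (-(((Δ:ℝ)-4)*((Δ:ℝ)-3))/2 + ((Δ:ℝ)-4)*((a:ℝ)-1) + ((Δ:ℝ)-3)/2) * q.2
        - (((Δ:ℝ)-4)*((Δ:ℝ)-3) + ((Δ:ℝ)-3)) * q.1 := by
    intro a q
    simp only [cross, f, Prod.fst_add, Prod.snd_add, Prod.smul_fst, Prod.smul_snd,
      smul_eq_mul, h2cast]
    field_simp
    ring
  have EL : ∀ (a : ℕ) (q : ℝ × ℝ),
      ((Δ:ℝ)-4)*((Δ:ℝ)-3) * cross (f Δ a + (1 / ((Δ : ℝ) - 4)) • f Δ 1) q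
      = (-(((Δ:ℝ)-4)*((Δ:ℝ)-3))/2 + ((Δ:ℝ)-4)*((a:ℝ)-1) - ((Δ:ℝ)-3)/2) * q.2
        - (((Δ:ℝ)-4)*((Δ:ℝ)-3) + ((Δ:ℝ)-3)) * q.1 := by
    intro a q
    simp only [cross, f, Prod.fst_add, Prod.snd_add, Prod.smul_fst, Prod.smul_snd,
      smul_eq_mul]
    field_simp
    ring
  have ED : ∀ q : ℝ × ℝ,
      ((Δ:ℝ)-3) * cross (f Δ (Δ - 2)) q
      = (((Δ:ℝ)-3)/2) * q.2 - ((Δ:ℝ)-3) * q.1 := by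
    intro q
    simp only [cross, f, h2cast]
    field_simp
    ring
  have E1 : ∀ q : ℝ × ℝ, cross (f Δ 1) q = -(1/2) * q.2 - q.1 := by
    intro q
    simp only [cross, f]
    norm_num
  rw [Set.eq_empty_iff_forall_notMem]
  rintro p ⟨⟨⟨-, hR⟩, ht1⟩, ⟨hL, -⟩, -⟩
  simp only [Set.mem_setOf_eq] at ht1
  simp only [RBR, Set.mem_insert_iff, Set.mem_setOf_eq] at hR
  simp only [LBR, Set.mem_insert_iff, Set.mem_setOf_eq] at hL
  have hE0 : 0 ≤ v.1 - u.1 := by linarith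
  have hED : v.1 - u.1 ≤ w.1 - v.1 := by linarith
  -- the height bound, cleared of division
  have hct : ((Δ:ℝ)-4) * (p.2 - v.2) < ((Δ:ℝ)-3) * (v.1 - u.1) := by
    have h1 : p.2 - v.2 < ((Δ:ℝ)-3)/((Δ:ℝ)-4) * (v.1-u.1) := by
      rw [hy1] at ht1; linarith
    calc ((Δ:ℝ)-4) * (p.2 - v.2)
        < ((Δ:ℝ)-4) * (((Δ:ℝ)-3)/((Δ:ℝ)-4) * (v.1-u.1)) := mul_lt_mul_of_pos_left h1 hc
      _ = ((Δ:ℝ)-3)*(v.1-u.1) := by field_simp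
  rcases hR with hpv | ⟨htv, hr0, -, hr1, -⟩
  · -- p = v
    subst hpv
    rcases hL with hpw | ⟨htw, -, -, hl1, hl2⟩
    · -- p = v = w
      subst hpw
      nlinarith [hct, mul_nonneg hs.le (show (0:ℝ) ≤ u.1 - p.1 by linarith)]
    · -- p = v, p in LBR cone of w
      have ht0 : p.2 - w.2 = 0 := by rw [← hy2]; ring
      have hcs : (0:ℝ) < ((Δ:ℝ)-4)*((Δ:ℝ)-3) + ((Δ:ℝ)-3) := by nlinarith [mul_pos hc hs]
      rcases Nat.lt_or_ge ℓ (Δ - 1) with hcase | hcase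
      · have h := hl1 ⟨hΔ, hℓ1, by omega⟩
        have h' := mul_pos (mul_pos hc hs) (neg_pos.mpr h)
        rw [mul_neg, EL ℓ (p - w)] at h'
        simp only [Prod.fst_sub, Prod.snd_sub] at h'
        rw [ht0] at h'
        nlinarith [h', mul_nonneg hcs.le (show (0:ℝ) ≤ w.1 - p.1 by linarith)]
      · have h := hl2 (by omega)
        have h' := mul_pos hs (neg_pos.mpr h)
        rw [mul_neg, ED (p - w)] at h'
        simp only [Prod.fst_sub, Prod.snd_sub] at h'
        rw [ht0] at h'
        nlinarith [h', mul_nonneg hs.le (show (0:ℝ) ≤ w.1 - p.1 by linarith)]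
  · -- p in RBR cone of v
    have ht0 : 0 ≤ p.2 - v.2 := by linarith
    have hA : (((Δ:ℝ)-3)*((Δ:ℝ)-3)) * (p.1 - v.1)
        < (p.2 - v.2) * (((Δ:ℝ)-4)*((Δ:ℝ)-4) - ((Δ:ℝ)-4)*((Δ:ℝ)-3)/2 + ((Δ:ℝ)-3)/2) := by
      rcases Nat.eq_zero_or_pos r with hrz | hrpos
      · have h := hr0 hrz
        rw [E1 (p - v)] at h
        simp only [Prod.fst_sub, Prod.snd_sub] at h
        have hb : (0:ℝ) ≤ ((Δ:ℝ)-4)*((Δ:ℝ)-4) - ((Δ:ℝ)-4)*((Δ:ℝ)-3)/2 + ((Δ:ℝ)-3)/2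
            + ((Δ:ℝ)-3)*((Δ:ℝ)-3)/2 := by nlinarith
        nlinarith [mul_pos (mul_pos hs hs) h, mul_nonneg ht0 hb]
      · have hr' : (r:ℝ) ≤ (Δ:ℝ) - 3 := by
          have h : ((r:ℕ):ℝ) ≤ ((Δ - 3 : ℕ):ℝ) := Nat.cast_le.mpr hr
          rw [Nat.cast_sub (by omega)] at h
          push_cast at h
          linarith
        have h := hr1 ⟨hΔ, hrpos, hr⟩
        have h' := mul_pos (mul_pos hc hs) h
        rw [ER r (p - v)] at h'
        simp only [Prod.fst_sub, Prod.snd_sub] at h'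
        nlinarith [h', mul_nonneg (mul_nonneg hc.le ht0) (sub_nonneg.mpr hr')]
    rcases hL with hpw | ⟨htw, -, -, hl1, hl2⟩
    · -- p = w
      have hpv2 : p.2 - v.2 = 0 := by rw [hpw, ← hy2]; ring
      rw [hpv2] at hA
      nlinarith [hA, mul_nonneg (mul_pos hs hs).le (show (0:ℝ) ≤ p.1 - v.1 by rw [hpw]; linarith)]
    · -- main case
      have hpw2 : p.2 - w.2 = p.2 - v.2 := by rw [hy2]
      have hB : (p.2 - v.2) * (((Δ:ℝ)-4) - ((Δ:ℝ)-4)*((Δ:ℝ)-3)/2 - ((Δ:ℝ)-3)/2)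
          < (((Δ:ℝ)-3)*((Δ:ℝ)-3)) * (p.1 - w.1) := by
        rcases Nat.lt_or_ge ℓ (Δ - 1) with hcase | hcase
        · have hl' : (2:ℝ) ≤ (ℓ:ℝ) := by exact_mod_cast hℓ1
          have h := hl1 ⟨hΔ, hℓ1, by omega⟩
          have h' := mul_pos (mul_pos hc hs) (neg_pos.mpr h)
          rw [mul_neg, EL ℓ (p - w)] at h'
          simp only [Prod.fst_sub, Prod.snd_sub] at h'
          rw [hpw2] at h'
          nlinarith [h', mul_nonneg (mul_nonneg hc.le ht0) (show (0:ℝ) ≤ (ℓ:ℝ) - 2 by linarith)]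
        · have h := hl2 (by omega)
          have h' := mul_pos hs (neg_pos.mpr h)
          rw [mul_neg, ED (p - w)] at h'
          simp only [Prod.fst_sub, Prod.snd_sub] at h'
          rw [hpw2] at h'
          have hb : (0:ℝ) ≤ ((Δ:ℝ)-3)*((Δ:ℝ)-3)/2
              - (((Δ:ℝ)-4) - ((Δ:ℝ)-4)*((Δ:ℝ)-3)/2 - ((Δ:ℝ)-3)/2) := by nlinarith
          nlinarith [mul_lt_mul_of_pos_left h' hs, mul_nonneg ht0 hb]
      -- final contradiction
      have key : (((Δ:ℝ)-3)*((Δ:ℝ)-3)) * (w.1 - v.1)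
          < (p.2 - v.2) * (((Δ:ℝ)-4)*((Δ:ℝ)-4) + 1) := by linarith
      have hpos : (0:ℝ) < ((Δ:ℝ)-4)*((Δ:ℝ)-4) + 1 := by positivity
      have k1 := mul_lt_mul_of_pos_left key hc
      have k2 := mul_lt_mul_of_pos_right hct hpos
      have k3 : ((Δ:ℝ)-3)*(v.1-u.1) * (((Δ:ℝ)-4)*((Δ:ℝ)-4) + 1)
          ≤ ((Δ:ℝ)-3)*(v.1-u.1) * (((Δ:ℝ)-4)*((Δ:ℝ)-3)) :=
        mul_le_mul_of_nonneg_left (by linarith) (mul_nonneg hs.le hE0)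
      have k4 : ((Δ:ℝ)-4)*((((Δ:ℝ)-3)*((Δ:ℝ)-3)) * (v.1-u.1))
          ≤ ((Δ:ℝ)-4)*((((Δ:ℝ)-3)*((Δ:ℝ)-3)) * (w.1-v.1)) := by
        apply mul_le_mul_of_nonneg_left _ hc.le
        exact mul_le_mul_of_nonneg_left hED (mul_pos hs hs).le
      nlinarith [k1, k2, k3, k4]
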